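/- arXiv:2001.06784 — 2 statements merged into one kernel-verified Lean document; each statement's English description precedes it below -/
import Mathlib

section
/- Let S be a set of vertices, p ∈ S a chosen pivot, and {v₁,…,v_ℓ} = S \ ({p} ∪ N(p)). Define the set families 𝒦_p = {cliques C ⊆ S with C \ {p} ⊆ N(S,p)} and for each i, 𝒦_i = {cliques C ⊆ S with v_i ∈ C and C \ {v_i} ⊆ N(S,v_i) \ {v₁,…,v_{i-1}}}. Then the family of all cliques of G contained in S is the disjoint union of 𝒦_p and the 𝒦_i for 1 ≤ i ≤ ℓ. -/
/-- The family 𝒦_p : cliques `C ⊆ S` with `C \ {p} ⊆ N(S,p)`. -/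
def InKp {V : Type*} (G : SimpleGraph V) (S : Finset V) (p : V) (C : Finset V) : Prop :=
  ∀ w ∈ C, w ≠ p → w ∈ S ∧ G.Adj p w

/-- The family 𝒦_i : cliques `C ⊆ S` with `v_i ∈ C` and
`C \ {v_i} ⊆ N(S, v_i) \ {v₁, …, v_{i-1}}`. -/
def InKi {V : Type*} (G : SimpleGraph V) (S : Finset V) (vs : List V)
    (i : Fin vs.length) (C : Finset V) : Prop :=
  vs.get i ∈ C ∧ ∀ w ∈ C, w ≠ vs.get i →
    w ∈ S ∧ G.Adj (vs.get i) w ∧ ∀ j : Fin vs.length, j < i → w ≠ vs.get j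

theorem stmt6 {V : Type*} [Fintype V] [DecidableEq V] (G : SimpleGraph V)
    [DecidableRel G.Adj] (S : Finset V) (p : V) (hp : p ∈ S)
    (vs : List V) (hnodup : vs.Nodup)
    (hvs : ∀ x : V, x ∈ vs ↔ x ∈ S ∧ x ≠ p ∧ ¬ G.Adj p x)
    (C : Finset V) (hC : G.IsClique ↑C) (hCS : C ⊆ S) : 
    ∃! o : Option (Fin vs.length),
      o.elim (InKp G S p C) (fun i => InKi G S vs i C) := by
  classical
  by_cases hex : ∃ n : ℕ, ∃ h : n < vs.length, vs.get ⟨n, h⟩ ∈ C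
  · -- pick minimal index
    let n := Nat.find hex
    obtain ⟨hn, hmem⟩ := Nat.find_spec hex
    have hmin : ∀ m < n, ∀ h : m < vs.length, vs.get ⟨m, h⟩ ∉ C := by
      intro m hm h hmC
      exact Nat.find_min hex hm ⟨h, hmC⟩
    set i : Fin vs.length := ⟨n, hn⟩ with hi
    refine ⟨some i, ?_, ?_⟩
    · refine ⟨hmem, ?_⟩
      intro w hw hne
      refine ⟨hCS hw, (hC hw hmem hne).symm, ?_⟩
      intro j hj hwj
      exact hmin j.val hj j.isLt (hwj ▸ hw)
    · rintro (_ | j) h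
      · -- none: InKp, contradiction
        have hi_mem : vs.get i ∈ vs := vs.get_mem i
        obtain ⟨_, hip, hnadj⟩ := (hvs _).1 hi_mem
        exact absurd (h _ hmem hip).2 hnadj
      · -- some j
        have hj : vs.get j ∈ C := h.1
        have hle : n ≤ j.val := by
          by_contra hlt
          push_neg at hlt
          exact hmin j.val hlt j.isLt hj
        rcases eq_or_lt_of_le hle with heq | hlt
        · congr 1
          exact Fin.ext heq.symm
        · exfalso
          have hne : vs.get i ≠ vs.get j := by
            intro hEq
            have h2 := congrArg Fin.val ((List.Nodup.get_inj_iff hnodup).1 hEq)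
            simp only [hi] at h2
            omega
          have := (h.2 (vs.get i) hmem hne).2.2 i hlt rfl
          exact this
  · refine ⟨none, ?_, ?_⟩
    · intro w hw hne
      refine ⟨hCS hw, ?_⟩
      by_contra hnadj
      have : w ∈ vs := (hvs w).2 ⟨hCS hw, hne, hnadj⟩
      obtain ⟨k, hk⟩ := List.get_of_mem this
      exact hex ⟨k.val, k.isLt, by rw [show (⟨k.val, k.isLt⟩ : Fin vs.length) = k from rfl, hk]; exact hw⟩
    · rintro (_ | j) h
      · rfl
      · exact absurd ⟨j.val, j.isLt, h.1⟩ hex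
end

section
/- If T : ℕ → ℝ satisfies T(0) ≤ c, and for every s ≥ 1 there exists r with 1 ≤ r ≤ s such that T(s) ≤ r · T(s − r) + c·s², then T(s) ≤ C · 3^{s/3} for some constant C depending only on c. (Recurrence underlying the 3^{n/3} bound on Bron–Kerbosch type pivoting.) -/
lemma bk_aux1 (r : ℕ) (hr : r ≠ 3) : 9 * r ^ 3 ≤ 8 * 3 ^ r := by
  rcases lt_or_ge r 5 with h | h
  · interval_cases r <;> simp_all
  · clear hr
    induction r, h using Nat.le_induction with
    | base => norm_num
    | succ n hn ih =>
      have h5 : 5 * n^2 ≤ n^3 := by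
        calc 5 * n^2 ≤ n * n^2 := Nat.mul_le_mul_right _ hn
          _ = n^3 := by ring
      have h6 : 5 * n ≤ n^2 := by
        calc 5 * n ≤ n * n := Nat.mul_le_mul_right _ hn
          _ = n^2 := by ring
      calc 9 * (n+1)^3 ≤ 3 * (9 * n^3) := by nlinarith [h5, h6, hn]
        _ ≤ 3 * (8 * 3^n) := by linarith
        _ = 8 * 3^(n+1) := by ring

lemma bk_aux2 (s : ℕ) : s ^ 6 ≤ 125 * 3 ^ s := by
  rcases lt_or_ge s 5 with h | h
  · interval_cases s <;> norm_num
  · induction s, h using Nat.le_induction with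
    | base => norm_num
    | succ n hn ih =>
      have h1 : 5 * (n+1) ≤ 6 * n := by omega
      have h3 : 15625 * (n+1)^6 ≤ 46656 * n^6 := by
        calc 15625 * (n+1)^6 = (5*(n+1))^6 := by ring
          _ ≤ (6*n)^6 := Nat.pow_le_pow_left h1 6
          _ = 46656 * n^6 := by ring
      have h4 : (n+1)^6 ≤ 3 * n^6 := by
        have h0 : 0 ≤ n^6 := Nat.zero_le _
        have : 15625 * (n+1)^6 ≤ 15625 * (3 * n^6) := by linarith
        exact Nat.le_of_mul_le_mul_left this (by norm_num)
      calc (n+1)^6 ≤ 3 * n^6 := h4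
        _ ≤ 3 * (125 * 3^n) := by linarith
        _ = 125 * 3^(n+1) := by ring

noncomputable def bkE (s : ℕ) : ℝ := (3:ℝ) ^ ((s:ℝ) / 3)

lemma bkE_pos (s : ℕ) : 0 < bkE s := Real.rpow_pos_of_pos (by norm_num) _

lemma bkE_one_le (s : ℕ) : 1 ≤ bkE s := by
  have h := Real.rpow_le_rpow_of_exponent_le (by norm_num : (1:ℝ) ≤ 3)
    (show (0:ℝ) ≤ (s:ℝ)/3 by positivity)
  simpa [Real.rpow_zero, bkE] using h

lemma bkE_cube (s : ℕ) : (bkE s) ^ 3 = 3 ^ s := by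
  rw [bkE, ← Real.rpow_natCast ((3:ℝ) ^ ((s:ℝ)/3)) 3,
    ← Real.rpow_mul (by norm_num : (0:ℝ) ≤ 3)]
  push_cast
  rw [div_mul_cancel₀ _ (by norm_num : (3:ℝ) ≠ 0), Real.rpow_natCast]

lemma bkE_add (a b : ℕ) : bkE (a + b) = bkE a * bkE b := by
  rw [bkE, bkE, bkE, ← Real.rpow_add (by norm_num : (0:ℝ) < 3)]
  push_cast
  ring_nf

lemma bkE_three : bkE 3 = 3 := by
  have h : ((3:ℕ):ℝ)/3 = 1 := by norm_num
  rw [bkE, h, Real.rpow_one]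

lemma bk_sq_le (s : ℕ) : (s:ℝ)^2 ≤ 5 * bkE s := by
  have h6 : ((s:ℝ)^2)^3 ≤ (5 * bkE s)^3 := by
    have h' : ((s:ℝ))^6 ≤ 125 * 3^s := by exact_mod_cast bk_aux2 s
    calc ((s:ℝ)^2)^3 = (s:ℝ)^6 := by ring
      _ ≤ 125 * 3^s := h'
      _ = (5 * bkE s)^3 := by rw [mul_pow, bkE_cube]; norm_num
  exact le_of_pow_le_pow_left₀ (by norm_num) (by have h := bkE_pos s; positivity) h6

lemma bk_r_le (r : ℕ) (hr : r ≠ 3) : (r:ℝ) ≤ (200/201) * bkE r := by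
  have h6 : ((r:ℝ))^3 ≤ ((200/201) * bkE r)^3 := by
    have h' : 9 * (r:ℝ)^3 ≤ 8 * 3^r := by exact_mod_cast bk_aux1 r hr
    have hc : ((200:ℝ)/201)^3 * 9 ≥ 8 := by norm_num
    have h3 : (0:ℝ) ≤ 3^r := by positivity
    calc ((r:ℝ))^3 ≤ (8/9) * 3^r := by linarith
      _ ≤ ((200/201)^3) * 3^r := by nlinarith
      _ = ((200/201) * bkE r)^3 := by rw [mul_pow, bkE_cube]
  exact le_of_pow_le_pow_left₀ (by norm_num) (by have h := bkE_pos r; positivity) h6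

theorem stmt13 :
    ∃ f : ℝ → ℝ, ∀ c : ℝ, 0 < c → ∀ T : ℕ → ℝ,
      (∀ s : ℕ, 0 ≤ T s) → T 0 ≤ c →
      (∀ s : ℕ, 1 ≤ s → ∃ r : ℕ, 1 ≤ r ∧ r ≤ s ∧
        T s ≤ (r : ℝ) * T (s - r) + c * (s : ℝ) ^ 2) →
      ∀ s : ℕ, T s ≤ f c * (3 : ℝ) ^ ((s : ℝ) / 3) := by
  use fun c => 10^7 * c
  intro c hc T hT0 hTz hrec
  -- crude bound for small s
  have hbase : ∀ s : ℕ, s ≤ 7 → T s ≤ c * 9 ^ s := by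
    intro s
    induction s using Nat.strong_induction_on with
    | _ s ih =>
      intro hs7
      rcases Nat.eq_zero_or_pos s with rfl | hs1
      · simpa using hTz
      · obtain ⟨r, hr1, hrs, hrec'⟩ := hrec s hs1
        have h1 : T (s - r) ≤ c * 9 ^ (s - r) := ih (s - r) (by omega) (by omega)
        have h2 : (9:ℝ) ^ (s - r) ≤ 9 ^ (s - 1) := by
          apply pow_le_pow_right₀ (by norm_num) (by omega)
        have t1 : (r:ℝ) * T (s-r) ≤ (s:ℝ) * T (s-r) :=
          mul_le_mul_of_nonneg_right (by exact_mod_cast hrs) (hT0 _)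
        have t2 : (s:ℝ) * T (s-r) ≤ (s:ℝ) * (c * 9^(s-r)) :=
          mul_le_mul_of_nonneg_left h1 (Nat.cast_nonneg s)
        have t3 : (s:ℝ) * (c * 9^(s-r)) ≤ (s:ℝ) * (c * 9^(s-1)) := by
          apply mul_le_mul_of_nonneg_left _ (Nat.cast_nonneg s)
          exact mul_le_mul_of_nonneg_left h2 hc.le
        have key : (s:ℝ) * 9^(s-1) + (s:ℝ)^2 ≤ 9^s := by
          interval_cases s <;> norm_num
        have key' := mul_le_mul_of_nonneg_left key hc.le
        nlinarith [hrec', t1, t2, t3, key']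
  -- main induction
  have main : ∀ s : ℕ, T s ≤ 10^7 * c * bkE s - 6 * c * (s:ℝ)^2 := by
    intro s
    induction s using Nat.strong_induction_on with
    | _ s ih =>
      by_cases hs7 : s ≤ 7
      · have hb := hbase s hs7
        have h9 : (9:ℝ)^s ≤ 9^7 := pow_le_pow_right₀ (by norm_num) hs7
        have e1 : c * (9:ℝ)^s ≤ 4782969 * c := by
          have := mul_le_mul_of_nonneg_left h9 hc.le
          nlinarith
        have e2 : c ≤ c * bkE s := by nlinarith [bkE_one_le s, hc.le]
        have hsq : (s:ℝ)^2 ≤ 49 := by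
          have hs : (s:ℝ) ≤ 7 := by exact_mod_cast hs7
          have hs0 : (0:ℝ) ≤ (s:ℝ) := Nat.cast_nonneg s
          nlinarith
        have e3 : c * (s:ℝ)^2 ≤ 49 * c := by
          have := mul_le_mul_of_nonneg_left hsq hc.le
          nlinarith
        linarith
      · push_neg at hs7
        obtain ⟨r, hr1, hrs, hrec'⟩ := hrec s (by omega)
        have ihr := ih (s - r) (by omega)
        by_cases hr3 : r = 3
        · subst hr3
          push_cast at hrec'
          have hEeq : bkE s = 3 * bkE (s - 3) := by
            have hadd : s - 3 + 3 = s := by omega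
            calc bkE s = bkE (s-3+3) := by rw [hadd]
              _ = bkE (s-3) * bkE 3 := bkE_add _ _
              _ = 3 * bkE (s-3) := by rw [bkE_three]; ring
          have hcast : ((s - 3 : ℕ) : ℝ) = (s:ℝ) - 3 := by
            have : (3:ℕ) ≤ s := by omega
            push_cast [this]
            ring
          rw [hcast] at ihr
          have hs8 : (8:ℝ) ≤ (s:ℝ) := by exact_mod_cast hs7
          have hkey : 7 * (s:ℝ)^2 ≤ 18 * ((s:ℝ) - 3)^2 := by
            nlinarith [sq_nonneg ((s:ℝ) - 8), hs8]
          have hkey' := mul_le_mul_of_nonneg_left hkey hc.le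
          rw [hEeq]
          linarith
        · have hrle := bk_r_le r hr3
          have hEsplit : bkE s = bkE (s-r) * bkE r := by
            have hadd : s - r + r = s := by omega
            calc bkE s = bkE (s-r+r) := by rw [hadd]
              _ = bkE (s-r) * bkE r := bkE_add _ _
          have hTs : T (s-r) ≤ 10^7 * c * bkE (s-r) := by
            have h0 : (0:ℝ) ≤ 6 * c * ((s-r:ℕ):ℝ)^2 := by positivity
            linarith
          have h1 : (r:ℝ) * T (s-r) ≤ (r:ℝ) * (10^7 * c * bkE (s-r)) :=
            mul_le_mul_of_nonneg_left hTs (Nat.cast_nonneg r)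
          have h2 : (r:ℝ) * (10^7 * c * bkE (s-r)) ≤ (2000000000/201) * (c * bkE s) := by
            have hpos : (0:ℝ) ≤ 10^7 * c * bkE (s-r) :=
              mul_nonneg (by positivity) (bkE_pos _).le
            calc (r:ℝ) * (10^7 * c * bkE (s-r))
                ≤ ((200/201) * bkE r) * (10^7 * c * bkE (s-r)) :=
                  mul_le_mul_of_nonneg_right hrle hpos
              _ = (2000000000/201) * (c * (bkE (s-r) * bkE r)) := by ring
              _ = (2000000000/201) * (c * bkE s) := by rw [← hEsplit]
          have h3 : c * (s:ℝ)^2 ≤ 5 * (c * bkE s) := by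
            have := mul_le_mul_of_nonneg_left (bk_sq_le s) hc.le
            nlinarith
          have hpos2 : (0:ℝ) ≤ c * bkE s := mul_nonneg hc.le (bkE_pos s).le
          linarith
  intro s
  have h := main s
  have h0 : (0:ℝ) ≤ 6 * c * (s:ℝ)^2 := by positivity
  have : T s ≤ 10^7 * c * bkE s := by linarith
  simpa [bkE, mul_assoc] using this
end
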